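/- Under the hypotheses (A1)–(A4) on a set C of q² affine points and a family of C-planes in PG(4,q), q even, no three points of C are collinear. -/

import Mathlib

variable {F : Type} [Field F]

/-- Points of PG(4,q). -/
abbrev Pt4 (F : Type) [Field F] := Projectivization F (Fin 5 → F)

/-- A projective subspace of PG(4,q) coming from a k-dimensional vector subspace. -/
def IsSub (k : ℕ) (S : Set (Pt4 F)) : Prop :=
  ∃ W : Submodule F (Fin 5 → F), Module.finrank F W = k ∧ S = {p | p.rep ∈ W}

/-- A line of PG(4,q). -/
def IsLine (S : Set (Pt4 F)) : Prop := IsSub 2 S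

/-- A plane of PG(4,q). -/
def IsPlane (S : Set (Pt4 F)) : Prop := IsSub 3 S

/-- The hyperplane at infinity x₄ = 0. -/
def Sinf : Set (Pt4 F) := {p | p.rep 4 = 0}

/-- Three points are collinear. -/
def Collin (p q r : Pt4 F) : Prop :=
  ∃ ℓ : Set (Pt4 F), IsLine ℓ ∧ p ∈ ℓ ∧ q ∈ ℓ ∧ r ∈ ℓ

/-- No three points of `S` are collinear. -/
def NoThreeCollinear (S : Set (Pt4 F)) : Prop :=
  ∀ p ∈ S, ∀ q ∈ S, ∀ r ∈ S, p ≠ q → p ≠ r → q ≠ r → ¬ Collin p q r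

/-- Under hypotheses (A1)–(A4) on a set C of q² affine points and a family of C-planes
in PG(4,q), q even, no three points of C are collinear. -/
theorem stmt12 [Fintype F] [CharP F 2] (hq2 : 2 < Fintype.card F)
    (C : Set (Pt4 F)) (Cpl : Set (Set (Pt4 F)))
    (hC : C.ncard = Fintype.card F ^ 2) (hCaff : ∀ p ∈ C, p ∉ Sinf)
    (hplane : ∀ π ∈ Cpl, IsPlane π)
    (A1 : ∀ π ∈ Cpl, (π ∩ C).ncard = Fintype.card F ∧ NoThreeCollinear (π ∩ C))
    (A2 : ∀ p ∈ C, ∀ q ∈ C, p ≠ q → ∃! π, π ∈ Cpl ∧ p ∈ π ∧ q ∈ π)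
    (A3 : ∀ p : Pt4 F, p ∉ Sinf → p ∉ C → ∃! π, π ∈ Cpl ∧ p ∈ π)
    (A4 : ∀ π : Set (Pt4 F), IsPlane π → 3 ≤ (π ∩ C).ncard →
      (π ∩ C).ncard = 4 ∨ π ∈ Cpl) :
    NoThreeCollinear C := by
  intro p hp q hq r hr hpq hpr hqr hcol
  obtain ⟨ℓ, ⟨W, hW2, hℓ⟩, hpℓ, hqℓ, hrℓ⟩ := hcol
  obtain ⟨π, ⟨hπCpl, hpπ, hqπ⟩, -⟩ := A2 p hp q hq hpq
  obtain ⟨V, hV3, hπeq⟩ := hplane π hπCpl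
  have hind : LinearIndependent F ![p.rep, q.rep] := by
    have h := (Projectivization.independent_pair_iff_ne p q).mpr hpq
    rw [Projectivization.independent_iff] at h
    convert h using 1
    funext i
    fin_cases i <;> rfl
    rfl
  have hle : Submodule.span F (Set.range ![p.rep, q.rep]) ≤ W := by
    rw [Submodule.span_le]
    rintro x ⟨i, rfl⟩
    fin_cases i
    · simpa [hℓ] using hpℓ
    · simpa [hℓ] using hqℓ
  have hspan : Submodule.span F (Set.range ![p.rep, q.rep]) = W := by
    apply Submodule.eq_of_le_of_finrank_eq hle
    rw [finrank_span_eq_card hind, hW2]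
    simp
  have hWV : W ≤ V := by
    rw [← hspan, Submodule.span_le]
    rintro x ⟨i, rfl⟩
    fin_cases i
    · have := hpπ; rw [hπeq] at this; exact this
    · have := hqπ; rw [hπeq] at this; exact this
  have hrπ : r ∈ π := by
    rw [hπeq]
    exact hWV (by rw [hℓ] at hrℓ; exact hrℓ)
  exact (A1 π hπCpl).2 p ⟨hpπ, hp⟩ q ⟨hqπ, hq⟩ r ⟨hrπ, hr⟩ hpq hpr hqr
    ⟨ℓ, ⟨W, hW2, hℓ⟩, hpℓ, hqℓ, hrℓ⟩
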